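/- Conversely, if S is a (k,ρ)-shortcut set of size at most α for the directed gadget graph G(H), then H has a hitting set of size at most α. In particular, any shortcut in S starting outside V(H) can be replaced by a shortcut of the form (v, T_2) with v ∈ V(H) without increasing the size of the shortcut set. -/

import Mathlib

open scoped ENNReal Classical

/-- A walk from `u` is recorded as the list `p` of vertices visited after `u`;
it ends at `v` if the last vertex of `u :: p` is `v`. -/
def WalkEnds {V : Type*} (u : V) (p : List V) (v : V) : Prop := p.getLastD u = v

/-- A weighted (di)graph on vertex set `V`: weight `⊤` means "no edge". -/
structure WGraph (V : Type*) where
  w : V → V → ℝ≥0∞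

namespace WGraph

variable {V : Type*} (G : WGraph V)

/-- Total weight of the walk `u :: p`. -/
noncomputable def walkWeight : V → List V → ℝ≥0∞
  | _, [] => 0
  | u, v :: p => G.w u v + walkWeight v p

/-- Weight distance. -/
noncomputable def dist (u v : V) : ℝ≥0∞ :=
  sInf {c | ∃ p : List V, WalkEnds u p v ∧ G.walkWeight u p = c}

/-- Hop distance: the minimum number of edges among minimum-weight walks;
`⊤` if `v` is unreachable from `u`. -/
noncomputable def hopdist (u v : V) : ℕ∞ :=
  if G.dist u v = ⊤ then ⊤
  else sInf {n : ℕ∞ | ∃ p : List V, WalkEnds u p v ∧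
    G.walkWeight u p = G.dist u v ∧ (p.length : ℕ∞) = n}

/-- The set of vertices reachable from `u`, other than `u` itself. -/
def Reach (u : V) : Set V := {v | v ≠ u ∧ G.dist u v ≠ ⊤}

/-- `S` is a `ρ`-closest neighbor set of `u`. -/
def IsClosest (ρ : ℕ) (u : V) (S : Set V) : Prop :=
  S ⊆ G.Reach u ∧ S.ncard = min (G.Reach u).ncard ρ ∧
    ∀ v ∈ S, ∀ x ∈ G.Reach u \ S, G.dist u v ≤ G.dist u x

/-- `u` has a `(k,ρ)`-ball: some `ρ`-closest neighbor set lies within hop distance `k`. -/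
def HasBall (k ρ : ℕ) (u : V) : Prop :=
  ∃ S : Set V, G.IsClosest ρ u S ∧ ∀ v ∈ S, G.hopdist u v ≤ (k : ℕ∞)

/-- `G` is a `(k,ρ)`-graph. -/
def IsKRhoGraph (k ρ : ℕ) : Prop := ∀ u, G.HasBall k ρ u

/-- `G` is undirected (symmetric weights). -/
def Symm : Prop := ∀ u v, G.w u v = G.w v u

/-- All edge weights are strictly positive (trivial for non-edges of weight `⊤`). -/
def Positive : Prop := ∀ u v, 0 < G.w u v

/-- `(u,v)` is a (potential) shortcut: `v` is reachable from `u` and the hop distance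
exceeds `1`. -/
def IsShortcut (u v : V) : Prop := G.dist u v ≠ ⊤ ∧ 1 < G.hopdist u v

/-- Add each pair in `S` as a directed edge of weight `G.dist`. -/
noncomputable def addD (S : Set (V × V)) : WGraph V :=
  ⟨fun a b => G.w a b ⊓ sInf {c | (a, b) ∈ S ∧ c = G.dist a b}⟩

/-- Add each pair in `S` as an undirected edge of weight `G.dist`. -/
noncomputable def addU (S : Set (V × V)) : WGraph V :=
  ⟨fun a b => G.w a b ⊓ sInf {c | ((a, b) ∈ S ∨ (b, a) ∈ S) ∧ c = G.dist a b}⟩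

/-- `S` is a (directed) `(k,ρ)`-shortcut set for `G`. -/
def IsShortcutSetD (k ρ : ℕ) (S : Set (V × V)) : Prop :=
  (∀ p ∈ S, G.IsShortcut p.1 p.2) ∧ (G.addD S).IsKRhoGraph k ρ ∧
    ∀ x y, (G.addD S).dist x y = G.dist x y

/-- `S` is an (undirected) `(k,ρ)`-shortcut set for `G`. -/
def IsShortcutSetU (k ρ : ℕ) (S : Set (V × V)) : Prop :=
  (∀ p ∈ S, G.IsShortcut p.1 p.2) ∧ (G.addU S).IsKRhoGraph k ρ ∧
    ∀ x y, (G.addU S).dist x y = G.dist x y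

end WGraph

/-- Vertices of the hitting-set gadget graph: for each hyperedge `e` the path vertices
`pv e 0, …, pv e (k-2)` (so `s_e = pv e 0` and `t_e = pv e (k-2)`), a vertex `hv v`
for each hypergraph vertex `v`, and the two terminals `T1`, `T2`. -/
inductive GV (α ε : Type*) where
  | pv : ε → ℕ → GV α ε
  | hv : α → GV α ε
  | T1 : GV α ε
  | T2 : GV α ε

/-- Edge weights of the directed hitting-set gadget graph. -/
noncomputable def gadgetW {α ε : Type*} [DecidableEq α] [DecidableEq ε]
    (k : ℕ) (E : ε → Finset α) : GV α ε → GV α ε → ℝ≥0∞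
  | .pv e i, .pv e' j => if e = e' ∧ j = i + 1 ∧ j ≤ k - 2 then 1 else ⊤
  | .pv e i, .hv v => if i = k - 2 ∧ v ∈ E e then 3 else ⊤
  | .hv _, .T1 => 1
  | .T1, .T2 => 1
  | _, _ => ⊤

/-- The directed hitting-set gadget graph `G(H)`. -/
noncomputable def gadget {α ε : Type*} [DecidableEq α] [DecidableEq ε]
    (k : ℕ) (E : ε → Finset α) : WGraph (GV α ε) :=
  ⟨gadgetW k E⟩

/-- The undirected hitting-set gadget graph: every directed edge replaced by an
undirected edge of the same weight. -/
noncomputable def ugadget {α ε : Type*} [DecidableEq α] [DecidableEq ε]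
    (k : ℕ) (E : ε → Finset α) : WGraph (GV α ε) :=
  ⟨fun a b => gadgetW k E a b ⊓ gadgetW k E b a⟩

/-- `U` is a hitting set of the hypergraph with hyperedges `E`. -/
def IsHittingSet {α ε : Type*} (E : ε → Finset α) (U : Finset α) : Prop :=
  ∀ e, ∃ v ∈ U, v ∈ E e

section AuxGeneral

variable {V : Type*}

lemma getLastD_append' (p q : List V) (d : V) :
    (p ++ q).getLastD d = q.getLastD (p.getLastD d) := by
  induction p generalizing d with
  | nil => simp
  | cons a p ih =>
      simp only [List.cons_append, List.getLastD_cons]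
      exact ih a

lemma walkWeight_append (G : WGraph V) (p : List V) :
    ∀ (u m : V) (q : List V), WalkEnds u p m →
      G.walkWeight u (p ++ q) = G.walkWeight u p + G.walkWeight m q := by
  induction p with
  | nil =>
      intro u m q h
      simp only [WalkEnds, List.getLastD_nil] at h
      subst h
      simp [WGraph.walkWeight]
  | cons a p ih =>
      intro u m q h
      simp only [WalkEnds, List.getLastD_cons] at h
      show G.w u a + G.walkWeight a (p ++ q) = G.w u a + G.walkWeight a p + G.walkWeight m q
      rw [ih a m q h, add_assoc]

lemma dist_le_walk (G : WGraph V) {u v : V} {p : List V} (h : WalkEnds u p v) :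
    G.dist u v ≤ G.walkWeight u p := sInf_le ⟨p, h, rfl⟩

lemma exists_walk_of_dist_ne_top (G : WGraph V) {u v : V} (h : G.dist u v ≠ ⊤) :
    ∃ p, WalkEnds u p v ∧ G.walkWeight u p ≠ ⊤ := by
  by_contra hc
  push_neg at hc
  apply h
  rw [WGraph.dist, sInf_eq_top]
  rintro c ⟨p, hp, rfl⟩
  exact hc p hp

lemma dist_ne_top_trans (G : WGraph V) {u v x : V}
    (h1 : G.dist u v ≠ ⊤) (h2 : G.dist v x ≠ ⊤) : G.dist u x ≠ ⊤ := by
  obtain ⟨p1, he1, hw1⟩ := exists_walk_of_dist_ne_top G h1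
  obtain ⟨p2, he2, hw2⟩ := exists_walk_of_dist_ne_top G h2
  have hends : WalkEnds u (p1 ++ p2) x := by
    simp only [WalkEnds, getLastD_append']
    rw [he1]; exact he2
  have := dist_le_walk G hends
  rw [walkWeight_append G p1 u v p2 he1] at this
  intro htop
  rw [htop, top_le_iff] at this
  exact (ENNReal.add_ne_top.2 ⟨hw1, hw2⟩) this

lemma wdist_self (G : WGraph V) (u : V) : G.dist u u = 0 := by
  refine le_antisymm ?_ zero_le
  exact sInf_le ⟨[], rfl, rfl⟩

lemma hopdist_le_of_walk (G : WGraph V) {u v : V} {p : List V}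
    (h1 : WalkEnds u p v) (h2 : G.walkWeight u p = G.dist u v) (h3 : G.dist u v ≠ ⊤) :
    G.hopdist u v ≤ (p.length : ℕ∞) := by
  rw [WGraph.hopdist, if_neg h3]
  exact sInf_le ⟨p, h1, h2, rfl⟩

lemma not_shortcut_self (G : WGraph V) (u : V) : ¬ G.IsShortcut u u := by
  rintro ⟨hfin, hhop⟩
  have h0 : G.dist u u = 0 := wdist_self G u
  have := hopdist_le_of_walk G (p := []) rfl (by simp [WGraph.walkWeight, h0]) hfin
  simp only [List.length_nil, Nat.cast_zero] at this
  exact absurd (lt_of_lt_of_le hhop this) (by simp)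

lemma addD_w_of_not_mem (G : WGraph V) (S : Set (V × V)) {a b : V} (h : (a, b) ∉ S) :
    (G.addD S).w a b = G.w a b := by
  have : {c | (a, b) ∈ S ∧ c = G.dist a b} = ∅ := by
    ext c; simp [h]
  simp [WGraph.addD, this]

lemma find_shortcut (G : WGraph V) (S : Set (V × V)) (p : List V) :
    ∀ u : V, (G.addD S).walkWeight u p ≠ ⊤ →
      G.walkWeight u p = (G.addD S).walkWeight u p ∨
        ∃ ab ∈ S, ab.1 = u ∨ G.dist u ab.1 ≠ ⊤ := by
  induction p with
  | nil => intro u _; left; rfl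
  | cons y q ih =>
      intro u hw
      rw [show (G.addD S).walkWeight u (y :: q) = (G.addD S).w u y + (G.addD S).walkWeight y q
        from rfl] at hw
      obtain ⟨hw1, hw2⟩ := ENNReal.add_ne_top.1 hw
      by_cases hmem : (u, y) ∈ S
      · exact Or.inr ⟨(u, y), hmem, Or.inl rfl⟩
      · have hwe : (G.addD S).w u y = G.w u y := addD_w_of_not_mem G S hmem
        have hdy : G.dist u y ≠ ⊤ := by
          have : G.dist u y ≤ G.w u y := by
            have := dist_le_walk G (p := [y]) (u := u) (v := y) rfl
            simpa [WGraph.walkWeight] using this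
          intro htop
          rw [htop, top_le_iff] at this
          rw [hwe] at hw1
          exact hw1 this
        rcases ih y hw2 with heq | ⟨ab, habS, hab⟩
        · left
          show G.w u y + G.walkWeight y q = _
          rw [heq, ← hwe]; rfl
        · refine Or.inr ⟨ab, habS, Or.inr ?_⟩
          rcases hab with rfl | hab
          · exact hdy
          · exact dist_ne_top_trans G hdy hab

end AuxGeneral

section AuxGadget

variable {α ε : Type*} [DecidableEq α] [DecidableEq ε] {k : ℕ} {E : ε → Finset α}

lemma gadget_w (x y : GV α ε) : (gadget k E).w x y = gadgetW k E x y := rfl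

lemma walkEnds_cons {V : Type*} {u y x : V} {q : List V} :
    WalkEnds u (y :: q) x ↔ WalkEnds y q x := by
  simp only [WalkEnds, List.getLastD_cons]

lemma gadget_wW (x y : GV α ε) (p : List (GV α ε)) :
    (gadget k E).walkWeight x (y :: p) = gadgetW k E x y + (gadget k E).walkWeight y p := rfl

lemma walk_from_T2 (p : List (GV α ε)) (x : GV α ε)
    (hw : (gadget k E).walkWeight GV.T2 p ≠ ⊤) (he : WalkEnds GV.T2 p x) :
    p = [] ∧ x = GV.T2 := by
  cases p with
  | nil => exact ⟨rfl, he.symm⟩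
  | cons y q =>
      exfalso
      rw [gadget_wW] at hw
      have : gadgetW k E GV.T2 y = ⊤ := by cases y <;> rfl
      simp [this] at hw

lemma walk_from_T1 (p : List (GV α ε)) (x : GV α ε)
    (hw : (gadget k E).walkWeight GV.T1 p ≠ ⊤) (he : WalkEnds GV.T1 p x) :
    (p = [] ∧ x = GV.T1) ∨ (x = GV.T2 ∧ p.length = 1 ∧
      (gadget k E).walkWeight GV.T1 p = 1) := by
  cases p with
  | nil => exact Or.inl ⟨rfl, he.symm⟩
  | cons y q =>
      rw [gadget_wW] at hw
      have hy : y = GV.T2 := by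
        by_contra hy
        have : gadgetW k E GV.T1 y = ⊤ := by
          cases y <;> first | rfl | exact absurd rfl hy
        simp [this] at hw
      subst hy
      have hw2 : (gadget k E).walkWeight GV.T2 q ≠ ⊤ := by
        intro h; rw [h] at hw; simp at hw
      have he2 : WalkEnds GV.T2 q x := walkEnds_cons.mp he
      obtain ⟨rfl, rfl⟩ := walk_from_T2 q x hw2 he2
      right
      refine ⟨rfl, rfl, ?_⟩
      show gadgetW k E GV.T1 GV.T2 + (gadget k E).walkWeight GV.T2 [] = 1
      show (1 : ℝ≥0∞) + 0 = 1
      simp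

lemma walk_from_hv (p : List (GV α ε)) (v : α) (x : GV α ε)
    (hw : (gadget k E).walkWeight (GV.hv v) p ≠ ⊤) (he : WalkEnds (GV.hv v) p x) :
    (p = [] ∧ x = GV.hv v) ∨ (x = GV.T1 ∧ p.length = 1 ∧
      (gadget k E).walkWeight (GV.hv v) p = 1) ∨ (x = GV.T2 ∧ p.length = 2 ∧
      (gadget k E).walkWeight (GV.hv v) p = 2) := by
  cases p with
  | nil => exact Or.inl ⟨rfl, he.symm⟩
  | cons y q =>
      rw [gadget_wW] at hw
      have hy : y = GV.T1 := by
        by_contra hy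
        have : gadgetW k E (GV.hv v) y = ⊤ := by
          cases y <;> first | rfl | exact absurd rfl hy
        simp [this] at hw
      subst hy
      have hw1 : gadgetW k E (GV.hv v) GV.T1 = 1 := rfl
      rw [hw1] at hw
      have hw2 : (gadget k E).walkWeight GV.T1 q ≠ ⊤ := by
        intro h; rw [h] at hw; simp at hw
      have he2 : WalkEnds GV.T1 q x := walkEnds_cons.mp he
      rcases walk_from_T1 q x hw2 he2 with ⟨rfl, rfl⟩ | ⟨rfl, hlen, hwq⟩
      · right; left
        refine ⟨rfl, rfl, ?_⟩
        rw [gadget_wW, hw1]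
        show (1 : ℝ≥0∞) + 0 = 1
        simp
      · right; right
        refine ⟨rfl, by simp [hlen], ?_⟩
        rw [gadget_wW, hw1, hwq]
        norm_num

lemma walk_from_pv (hk : 2 ≤ k) (e : ε) (p : List (GV α ε)) :
    ∀ (i : ℕ) (x : GV α ε), (gadget k E).walkWeight (GV.pv e i) p ≠ ⊤ →
      WalkEnds (GV.pv e i) p x →
    (x = GV.pv e (i + p.length) ∧ (p = [] ∨ i + p.length ≤ k - 2) ∧
      (gadget k E).walkWeight (GV.pv e i) p = (p.length : ℝ≥0∞)) ∨
    ((∃ v ∈ E e, x = GV.hv v) ∧ i ≤ k - 2 ∧ i + p.length = k - 1 ∧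
      (gadget k E).walkWeight (GV.pv e i) p = (p.length : ℝ≥0∞) + 2) ∨
    (x = GV.T1 ∧ i ≤ k - 2 ∧ i + p.length = k ∧
      (gadget k E).walkWeight (GV.pv e i) p = (p.length : ℝ≥0∞) + 2) ∨
    (x = GV.T2 ∧ i ≤ k - 2 ∧ i + p.length = k + 1 ∧
      (gadget k E).walkWeight (GV.pv e i) p = (p.length : ℝ≥0∞) + 2) := by
  induction p with
  | nil =>
      intro i x _ he
      left
      exact ⟨by simpa using he.symm, Or.inl rfl, by simp [WGraph.walkWeight]⟩
  | cons y q ih =>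
      intro i x hw he
      rw [gadget_wW] at hw
      have he2 : WalkEnds y q x := walkEnds_cons.mp he
      have hw2 : (gadget k E).walkWeight y q ≠ ⊤ := by
        intro h; rw [h] at hw; simp at hw
      cases y with
      | T1 => exact absurd (by rfl : gadgetW k E (GV.pv e i) GV.T1 = ⊤) (by simp_all)
      | T2 => exact absurd (by rfl : gadgetW k E (GV.pv e i) GV.T2 = ⊤) (by simp_all)
      | pv e' j =>
          have hcond : e = e' ∧ j = i + 1 ∧ j ≤ k - 2 := by
            by_contra hc
            rw [show gadgetW k E (GV.pv e i) (GV.pv e' j)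
              = if e = e' ∧ j = i+1 ∧ j ≤ k-2 then 1 else ⊤ from rfl, if_neg hc] at hw
            simp at hw
          obtain ⟨rfl, rfl, hj⟩ := hcond
          have hwval : gadgetW k E (GV.pv e i) (GV.pv e (i+1)) = 1 := by
            rw [show gadgetW k E (GV.pv e i) (GV.pv e (i+1))
              = if e = e ∧ i+1 = i+1 ∧ i+1 ≤ k-2 then 1 else ⊤ from rfl,
              if_pos ⟨rfl, rfl, hj⟩]
          rcases ih (i+1) x hw2 he2 with ⟨hx, hcond, hwq⟩ | ⟨hx, h1, h2, hwq⟩ |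
            ⟨hx, h1, h2, hwq⟩ | ⟨hx, h1, h2, hwq⟩
          · left
            refine ⟨by rw [hx]; congr 1; simp; omega, ?_, ?_⟩
            · right
              rcases hcond with rfl | hle
              · simpa using hj
              · simp only [List.length_cons]; omega
            · rw [gadget_wW, hwval, hwq]
              simp only [List.length_cons]
              push_cast
              ring
          · refine Or.inr (Or.inl ⟨hx, by omega, by simp only [List.length_cons]; omega, ?_⟩)
            rw [gadget_wW, hwval, hwq]; simp only [List.length_cons]; push_cast; ring
          · refine Or.inr (Or.inr (Or.inl ⟨hx, by omega, by simp only [List.length_cons]; omega, ?_⟩))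
            rw [gadget_wW, hwval, hwq]; simp only [List.length_cons]; push_cast; ring
          · refine Or.inr (Or.inr (Or.inr ⟨hx, by omega, by simp only [List.length_cons]; omega, ?_⟩))
            rw [gadget_wW, hwval, hwq]; simp only [List.length_cons]; push_cast; ring
      | hv v =>
          have hcond : i = k - 2 ∧ v ∈ E e := by
            by_contra hc
            rw [show gadgetW k E (GV.pv e i) (GV.hv v)
              = if i = k - 2 ∧ v ∈ E e then 3 else ⊤ from rfl, if_neg hc] at hw
            simp at hw
          obtain ⟨hik, hvE⟩ := hcond
          have hwval : gadgetW k E (GV.pv e i) (GV.hv v) = 3 := by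
            rw [show gadgetW k E (GV.pv e i) (GV.hv v)
              = if i = k - 2 ∧ v ∈ E e then 3 else ⊤ from rfl, if_pos ⟨hik, hvE⟩]
          rcases walk_from_hv q v x hw2 he2 with ⟨rfl, rfl⟩ | ⟨rfl, hlen, hwq⟩ |
            ⟨rfl, hlen, hwq⟩
          · refine Or.inr (Or.inl ⟨⟨v, hvE, rfl⟩, by omega, by simp; omega, ?_⟩)
            rw [gadget_wW, hwval]
            show (3 : ℝ≥0∞) + 0 = ((1:ℕ) : ℝ≥0∞) + 2
            norm_num
          · refine Or.inr (Or.inr (Or.inl ⟨rfl, by omega, by simp [hlen]; omega, ?_⟩))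
            rw [gadget_wW, hwval, hwq]
            simp only [List.length_cons, hlen]
            push_cast
            norm_num
          · refine Or.inr (Or.inr (Or.inr ⟨rfl, by omega, by simp [hlen]; omega, ?_⟩))
            rw [gadget_wW, hwval, hwq]
            simp only [List.length_cons, hlen]
            push_cast
            norm_num

end AuxGadget

set_option linter.unusedSectionVars false

section AuxGadget2

variable {α ε : Type*} [DecidableEq α] [DecidableEq ε] {k : ℕ} {E : ε → Finset α}

lemma range'_weight (e : ε) :
    ∀ (m i : ℕ), i + m ≤ k - 2 → ∀ rest : List (GV α ε),
      (gadget k E).walkWeight (GV.pv e i) ((List.range' (i+1) m).map (GV.pv e) ++ rest)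
        = (m : ℝ≥0∞) + (gadget k E).walkWeight (GV.pv e (i+m)) rest := by
  intro m
  induction m with
  | zero => intro i _ rest; simp
  | succ m ih =>
      intro i hi rest
      rw [List.range'_succ]
      have hstep : gadgetW k E (GV.pv e i) (GV.pv e (i+1)) = 1 := by
        rw [show gadgetW k E (GV.pv e i) (GV.pv e (i+1))
          = if e = e ∧ i+1 = i+1 ∧ i+1 ≤ k-2 then 1 else ⊤ from rfl,
          if_pos ⟨rfl, rfl, by omega⟩]
      rw [List.map_cons, List.cons_append, gadget_wW, hstep,
        show i + 1 + 1 = (i + 1) + 1 from rfl, ih (i+1) (by omega) rest]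
      rw [show i + (m + 1) = (i + 1) + m by omega]
      push_cast
      ring

lemma ends_shortest (e : ε) (v : α) :
    WalkEnds (GV.pv e 0) ((List.range' 1 (k-2)).map (GV.pv e) ++ [GV.hv v, GV.T1, GV.T2])
      GV.T2 := by
  rw [WalkEnds, getLastD_append']
  rfl

lemma weight_shortest (hk : 2 ≤ k) (e : ε) {v : α} (hv : v ∈ E e) :
    (gadget k E).walkWeight (GV.pv e 0)
      ((List.range' 1 (k-2)).map (GV.pv e) ++ [GV.hv v, GV.T1, GV.T2])
      = (k : ℝ≥0∞) + 3 := by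
  have h := range'_weight (k := k) (E := E) e (k-2) 0 (by simp) [GV.hv v, GV.T1, GV.T2]
  simp only [Nat.zero_add] at h
  rw [h]
  have h3 : gadgetW k E (GV.pv e (k-2)) (GV.hv v) = 3 := by
    rw [show gadgetW k E (GV.pv e (k-2)) (GV.hv v)
      = if k-2 = k-2 ∧ v ∈ E e then 3 else ⊤ from rfl, if_pos ⟨rfl, hv⟩]
  rw [gadget_wW, h3, gadget_wW, show gadgetW k E (GV.hv v) GV.T1 = 1 from rfl,
    gadget_wW, show gadgetW k E GV.T1 GV.T2 = 1 from rfl,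
    show (gadget k E).walkWeight GV.T2 [] = 0 from rfl]
  obtain ⟨m, rfl⟩ : ∃ m, k = m + 2 := ⟨k - 2, by omega⟩
  rw [show m + 2 - 2 = m from rfl]
  push_cast
  ring

lemma dist_pv0_T2 (hk : 2 ≤ k) (e : ε) (hne : (E e).Nonempty) :
    (gadget k E).dist (GV.pv e 0) GV.T2 = (k : ℝ≥0∞) + 3 := by
  obtain ⟨v, hv⟩ := hne
  refine le_antisymm ?_ ?_
  · calc (gadget k E).dist (GV.pv e 0) GV.T2
        ≤ (gadget k E).walkWeight (GV.pv e 0)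
          ((List.range' 1 (k-2)).map (GV.pv e) ++ [GV.hv v, GV.T1, GV.T2]) :=
          dist_le_walk _ (ends_shortest e v)
      _ = (k : ℝ≥0∞) + 3 := weight_shortest hk e hv
  · rw [WGraph.dist]
    refine le_sInf ?_
    rintro c ⟨p, hp, rfl⟩
    by_cases hw : (gadget k E).walkWeight (GV.pv e 0) p = ⊤
    · rw [hw]; exact le_top
    · rcases walk_from_pv hk e p 0 GV.T2 hw hp with ⟨hx, _, _⟩ | ⟨⟨v', _, hx⟩, _⟩ |
        ⟨hx, _⟩ | ⟨_, _, hlen, hwt⟩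
      · exact absurd hx (by simp)
      · exact absurd hx (by simp)
      · exact absurd hx (by simp)
      · rw [Nat.zero_add] at hlen
        rw [hwt, hlen]
        push_cast
        ring_nf
        exact le_refl _

lemma dist_T1_T2 : (gadget k E).dist GV.T1 GV.T2 = 1 := by
  refine le_antisymm ?_ ?_
  · have := dist_le_walk (gadget k E) (p := [GV.T2]) (u := GV.T1) (v := GV.T2) rfl
    simpa [gadget_wW, show gadgetW k E GV.T1 GV.T2 = 1 from rfl,
      show (gadget k E).walkWeight GV.T2 [] = 0 from rfl] using this
  · rw [WGraph.dist]
    refine le_sInf ?_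
    rintro c ⟨p, hp, rfl⟩
    cases p with
    | nil => exact absurd hp (by simp [WalkEnds])
    | cons y q =>
        rw [gadget_wW]
        have h1 : (1 : ℝ≥0∞) ≤ gadgetW k E GV.T1 y := by
          cases y <;> first | exact le_top | exact le_refl 1
        exact le_trans h1 le_self_add

lemma not_shortcut_T1 (y : GV α ε) : ¬ (gadget k E).IsShortcut GV.T1 y := by
  rintro ⟨hfin, hhop⟩
  obtain ⟨p, hp, hw⟩ := exists_walk_of_dist_ne_top _ hfin
  rcases walk_from_T1 p y hw hp with ⟨rfl, rfl⟩ | ⟨rfl, hlen, hwt⟩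
  · exact not_shortcut_self _ _ ⟨hfin, hhop⟩
  · have hd : (gadget k E).dist GV.T1 GV.T2 = 1 := dist_T1_T2
    have hle := hopdist_le_of_walk (gadget k E) hp (by rw [hwt, hd]) (by rw [hd]; simp)
    rw [hlen] at hle
    exact absurd (lt_of_lt_of_le hhop hle) (by simp)

lemma not_shortcut_T2 (y : GV α ε) : ¬ (gadget k E).IsShortcut GV.T2 y := by
  rintro ⟨hfin, hhop⟩
  obtain ⟨p, hp, hw⟩ := exists_walk_of_dist_ne_top _ hfin
  obtain ⟨rfl, rfl⟩ := walk_from_T2 p y hw hp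
  exact not_shortcut_self _ _ ⟨hfin, hhop⟩

lemma shortcut_pv_le (hk : 2 ≤ k) (e : ε) (i : ℕ) (y : GV α ε)
    (h : (gadget k E).IsShortcut (GV.pv e i) y) : i ≤ k - 2 := by
  by_contra hi
  push_neg at hi
  obtain ⟨hfin, hhop⟩ := h
  obtain ⟨p, hp, hw⟩ := exists_walk_of_dist_ne_top _ hfin
  rcases walk_from_pv hk e p i y hw hp with ⟨hx, hc, _⟩ | ⟨_, h1, _⟩ | ⟨_, h1, _⟩ |
    ⟨_, h1, _⟩
  · rcases hc with rfl | hle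
    · simp only [List.length_nil, Nat.add_zero] at hx
      subst hx
      exact not_shortcut_self _ _ ⟨hfin, hhop⟩
    · omega
  · omega
  · omega
  · omega

end AuxGadget2

lemma hopdist_witness {V : Type*} (G : WGraph V) {u v : V} {k : ℕ}
    (hfin : G.dist u v ≠ ⊤) (h : G.hopdist u v ≤ (k : ℕ∞)) :
    ∃ p, WalkEnds u p v ∧ G.walkWeight u p = G.dist u v ∧ p.length ≤ k := by
  rw [WGraph.hopdist, if_neg hfin] at h
  have hne : {n : ℕ∞ | ∃ p, WalkEnds u p v ∧ G.walkWeight u p = G.dist u v ∧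
      (p.length : ℕ∞) = n}.Nonempty := by
    by_contra hc
    rw [Set.not_nonempty_iff_eq_empty] at hc
    rw [hc, sInf_empty, top_le_iff] at h
    simp at h
  obtain ⟨p, hp, hw, hlen⟩ := csInf_mem hne
  refine ⟨p, hp, hw, ?_⟩
  rw [← hlen] at h
  exact_mod_cast h

/-- The vertex chosen for a shortcut. -/
noncomputable def pickF {α ε : Type*} [DecidableEq α] (E : ε → Finset α) :
    GV α ε × GV α ε → Finset α := fun ab =>
  match ab.1 with
  | GV.hv v => {v}
  | GV.pv e _ => if h : (E e).Nonempty then {h.choose} else ∅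
  | _ => ∅

lemma pickF_card {α ε : Type*} [DecidableEq α] (E : ε → Finset α)
    (ab : GV α ε × GV α ε) : (pickF E ab).card ≤ 1 := by
  obtain ⟨x, y⟩ := ab
  cases x <;> simp only [pickF] <;> first
    | simp
    | (split <;> simp)

/-- if `S` is a `(k,ρ)`-shortcut set of size at most `a` for the
directed gadget graph (k ≥ 2, ρ = k + d ≥ k + 2, uniform hyperedge size d), then the
hypergraph has a hitting set of size at most `a`. -/
theorem stmt12 {α ε : Type*} [Fintype α] [Fintype ε] [DecidableEq α] [DecidableEq ε]
    (k ρ d : ℕ) (hk : 2 ≤ k) (hd : 2 ≤ d) (hρ : ρ = k + d)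
    (E : ε → Finset α) (hcard : ∀ e, (E e).card = d)
    (hV : Nonempty ε → d + 1 ≤ Fintype.card α)
    (a : ℕ) (S : Set (GV α ε × GV α ε))
    (hS : (gadget k E).IsShortcutSetD k ρ S) (hSa : S.ncard ≤ a) :
    ∃ U : Finset α, U.card ≤ a ∧ IsHittingSet E U := by
  obtain ⟨hShort, hKρ, hDist⟩ := hS
  have hne : ∀ e, (E e).Nonempty := fun e => Finset.card_pos.mp (by rw [hcard e]; omega)
  -- S is finite
  have hxF : ∀ x y : GV α ε, (gadget k E).IsShortcut x y →
      x ∈ ((Set.range fun q : ε × Fin (k+1) => GV.pv q.1 q.2) ∪ Set.range GV.hv ∪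
        {GV.T1, GV.T2}) := by
    intro x y hsc
    cases x with
    | pv e i =>
        have hle := shortcut_pv_le hk e i y hsc
        exact Or.inl (Or.inl ⟨(e, ⟨i, by omega⟩), rfl⟩)
    | hv v => exact Or.inl (Or.inr ⟨v, rfl⟩)
    | T1 => exact Or.inr (Set.mem_insert _ _)
    | T2 => exact Or.inr (Set.mem_insert_of_mem _ rfl)
  have hyF : ∀ x y : GV α ε, (gadget k E).IsShortcut x y →
      y ∈ ((Set.range fun q : ε × Fin (k+1) => GV.pv q.1 q.2) ∪ Set.range GV.hv ∪
        {GV.T1, GV.T2}) := by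
    intro x y hsc
    obtain ⟨p, hp, hw⟩ := exists_walk_of_dist_ne_top _ hsc.1
    cases x with
    | pv e i =>
        have hile := shortcut_pv_le hk e i y hsc
        rcases walk_from_pv hk e p i y hw hp with ⟨hx, hc, _⟩ | ⟨⟨v, _, hx⟩, _⟩ |
          ⟨hx, _⟩ | ⟨hx, _⟩
        · refine Or.inl (Or.inl ⟨(e, ⟨i + p.length, ?_⟩), hx.symm⟩)
          rcases hc with rfl | hle
          · simp; omega
          · omega
        · exact Or.inl (Or.inr ⟨v, hx.symm⟩)
        · exact Or.inr (by rw [hx]; exact Set.mem_insert _ _)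
        · exact Or.inr (by rw [hx]; exact Set.mem_insert_of_mem _ rfl)
    | hv v =>
        rcases walk_from_hv p v y hw hp with ⟨_, hx⟩ | ⟨hx, _⟩ | ⟨hx, _⟩
        · exact Or.inl (Or.inr ⟨v, hx.symm⟩)
        · exact Or.inr (by rw [hx]; exact Set.mem_insert _ _)
        · exact Or.inr (by rw [hx]; exact Set.mem_insert_of_mem _ rfl)
    | T1 => exact absurd hsc (not_shortcut_T1 y)
    | T2 => exact absurd hsc (not_shortcut_T2 y)
  have hSfin : S.Finite := by
    have hFfin : ((Set.range fun q : ε × Fin (k+1) => GV.pv q.1 q.2) ∪ Set.range GV.hv ∪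
        ({GV.T1, GV.T2} : Set (GV α ε))).Finite :=
      (((Set.finite_range _).union (Set.finite_range _)).union
        ((Set.finite_singleton _).insert _))
    refine (hFfin.prod hFfin).subset ?_
    rintro ⟨x, y⟩ hxy
    exact ⟨hxF x y (hShort _ hxy), hyF x y (hShort _ hxy)⟩
  refine ⟨hSfin.toFinset.biUnion (pickF E), ?_, ?_⟩
  · calc (hSfin.toFinset.biUnion (pickF E)).card
        ≤ hSfin.toFinset.card * 1 :=
          Finset.card_biUnion_le_card_mul _ _ 1 (fun ab _ => pickF_card E ab)
      _ = S.ncard := by rw [mul_one, Set.ncard_eq_toFinset_card S hSfin]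
      _ ≤ a := hSa
  -- hitting set property
  intro e
  have hdist : (gadget k E).dist (GV.pv e 0) GV.T2 = (k : ℝ≥0∞) + 3 :=
    dist_pv0_T2 hk e (hne e)
  have hk3ne : ((k : ℝ≥0∞) + 3) ≠ ⊤ :=
    ENNReal.add_ne_top.mpr ⟨ENNReal.natCast_ne_top k, ENNReal.ofNat_ne_top⟩
  have hdistne : (gadget k E).dist (GV.pv e 0) GV.T2 ≠ ⊤ := by rw [hdist]; exact hk3ne
  -- Reach is small
  have hReachSub : (gadget k E).Reach (GV.pv e 0) ⊆
      ↑(((Finset.Icc 1 (k-2)).image (GV.pv e)) ∪ ((E e).image GV.hv) ∪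
        ({GV.T1, GV.T2} : Finset (GV α ε))) := by
    rintro x ⟨hxne, hxd⟩
    obtain ⟨p, hp, hw⟩ := exists_walk_of_dist_ne_top _ hxd
    rw [Finset.mem_coe]
    rcases walk_from_pv hk e p 0 x hw hp with ⟨hx, hc, _⟩ | ⟨⟨v, hv, hx⟩, _⟩ |
      ⟨hx, _⟩ | ⟨hx, _⟩
    · rcases hc with rfl | hle
      · exact absurd (by rw [hx]; norm_num : x = GV.pv e 0) hxne
      · by_cases h0 : p.length = 0
        · refine absurd ?_ hxne
          rw [hx, h0]
        · refine Finset.mem_union_left _ (Finset.mem_union_left _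
            (Finset.mem_image.mpr ⟨0 + p.length, Finset.mem_Icc.mpr ⟨by omega, by omega⟩,
              hx.symm⟩))
    · exact Finset.mem_union_left _ (Finset.mem_union_right _
        (Finset.mem_image.mpr ⟨v, hv, hx.symm⟩))
    · exact Finset.mem_union_right _ (by rw [hx]; exact Finset.mem_insert_self _ _)
    · exact Finset.mem_union_right _
        (by rw [hx]; exact Finset.mem_insert_of_mem (Finset.mem_singleton_self _))
  have hRncard : ((gadget k E).Reach (GV.pv e 0)).ncard ≤ ρ := by
    have h1 := Set.ncard_le_ncard hReachSub (Finset.finite_toSet _)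
    rw [Set.ncard_coe_finset] at h1
    have h2 := Finset.card_union_le
      (((Finset.Icc 1 (k-2)).image (GV.pv e)) ∪ ((E e).image GV.hv))
      ({GV.T1, GV.T2} : Finset (GV α ε))
    have h3 := Finset.card_union_le ((Finset.Icc 1 (k-2)).image (GV.pv e))
      ((E e).image GV.hv)
    have h4 := Finset.card_image_le (s := Finset.Icc 1 (k-2)) (f := (GV.pv e : ℕ → GV α ε))
    have h5 := Finset.card_image_le (s := E e) (f := (GV.hv : α → GV α ε))
    have h6 : ({GV.T1, GV.T2} : Finset (GV α ε)).card ≤ 2 := by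
      refine le_trans (Finset.card_insert_le _ _) ?_
      simp
    rw [Nat.card_Icc] at h4
    rw [hcard e] at h5
    omega
  -- extract the ball around pv e 0 in the shortcutted graph
  obtain ⟨S', ⟨hsub, hncard, _⟩, hball⟩ := hKρ (GV.pv e 0)
  have hreach : ((gadget k E).addD S).Reach (GV.pv e 0) = (gadget k E).Reach (GV.pv e 0) := by
    ext x
    simp [WGraph.Reach, hDist]
  rw [hreach] at hsub hncard
  have hSR : S' = (gadget k E).Reach (GV.pv e 0) := by
    refine Set.eq_of_subset_of_ncard_le hsub ?_ ((Finset.finite_toSet _).subset hReachSub)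
    rw [hncard, min_eq_left hRncard]
  have hT2mem : GV.T2 ∈ (gadget k E).Reach (GV.pv e 0) := ⟨by simp, hdistne⟩
  have hhop : ((gadget k E).addD S).hopdist (GV.pv e 0) GV.T2 ≤ (k : ℕ∞) :=
    hball _ (hSR ▸ hT2mem)
  have hdfin' : ((gadget k E).addD S).dist (GV.pv e 0) GV.T2 ≠ ⊤ := by
    rw [hDist]; exact hdistne
  obtain ⟨p, hp, hwt, hplen⟩ := hopdist_witness _ hdfin' hhop
  have hwt' : ((gadget k E).addD S).walkWeight (GV.pv e 0) p = (k : ℝ≥0∞) + 3 := by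
    rw [hwt, hDist, hdist]
  rcases find_shortcut (gadget k E) S p (GV.pv e 0) (by rw [hwt']; exact hk3ne)
    with heq | ⟨⟨x, y⟩, hxyS, hxy⟩
  · exfalso
    have hwG : (gadget k E).walkWeight (GV.pv e 0) p = (k : ℝ≥0∞) + 3 := by
      rw [heq, hwt']
    rcases walk_from_pv hk e p 0 GV.T2 (by rw [hwG]; exact hk3ne) hp with ⟨hx, _, _⟩ |
      ⟨⟨v, _, hx⟩, _⟩ | ⟨hx, _⟩ | ⟨_, _, hlen2, _⟩
    · exact absurd hx (by simp)
    · exact absurd hx (by simp)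
    · exact absurd hx (by simp)
    · omega
  · have hsc := hShort (x, y) hxyS
    have hpick : ∃ v₀ ∈ pickF E (x, y), v₀ ∈ E e := by
      cases x with
      | T1 => exact absurd hsc (not_shortcut_T1 y)
      | T2 => exact absurd hsc (not_shortcut_T2 y)
      | hv v =>
          rcases hxy with h | h
          · exact absurd h (by simp)
          · obtain ⟨q, hq, hwq⟩ := exists_walk_of_dist_ne_top _ h
            rcases walk_from_pv hk e q 0 (GV.hv v) hwq hq with ⟨hx, _, _⟩ |
              ⟨⟨v', hv', hx⟩, _⟩ | ⟨hx, _⟩ | ⟨hx, _⟩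
            · exact absurd hx (by simp)
            · obtain rfl : v = v' := by
                simpa using hx
              exact ⟨v, by simp [pickF], hv'⟩
            · exact absurd hx (by simp)
            · exact absurd hx (by simp)
      | pv e' i =>
          have he' : e' = e := by
            rcases hxy with h | h
            · simpa using congrArg (fun z : GV α ε => (match z with | GV.pv e'' _ => e'' | _ => e' : ε)) h
            · obtain ⟨q, hq, hwq⟩ := exists_walk_of_dist_ne_top _ h
              rcases walk_from_pv hk e q 0 (GV.pv e' i) hwq hq with ⟨hx, _, _⟩ |
                ⟨⟨v', hv', hx⟩, _⟩ | ⟨hx, _⟩ | ⟨hx, _⟩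
              · simpa using congrArg (fun z : GV α ε => (match z with | GV.pv e'' _ => e'' | _ => e' : ε)) hx
              · exact absurd hx (by simp)
              · exact absurd hx (by simp)
              · exact absurd hx (by simp)
          subst he'
          refine ⟨(hne e').choose, ?_, (hne e').choose_spec⟩
          simp [pickF, hne e']
    obtain ⟨v₀, hv₀p, hv₀E⟩ := hpick
    exact ⟨v₀, Finset.mem_biUnion.mpr ⟨(x, y), hSfin.mem_toFinset.mpr hxyS, hv₀p⟩, hv₀E⟩
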